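/- Let n ≥ 2 and 0 < d < n − 1. There exists a constant C = C(n,d) > 0 such that for every radially symmetric integrable function w : ℝⁿ → ℝ and every x ∈ ℝⁿ with x ≠ 0, |x|^d ∫_{ℝⁿ} |x−y|^{−d} |w(y)| dy ≤ C ∫_{ℝⁿ} |w(y)| dy. -/

import Mathlib

open MeasureTheory Real Metric Set ENNReal
open scoped ENNReal

private lemma rot_lintegral' {n : ℕ} (w : EuclideanSpace ℝ (Fin n) → ℝ)
    (hrad : ∀ x y : EuclideanSpace ℝ (Fin n), ‖x‖ = ‖y‖ → w x = w y)
    {x z : EuclideanSpace ℝ (Fin n)} (hz : ‖z‖ = ‖x‖) (ρ : ℝ) :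
    ∫⁻ y in ball z ρ, ENNReal.ofReal |w y| = ∫⁻ y in ball x ρ, ENNReal.ofReal |w y| := by
  obtain ⟨R, hR⟩ : ∃ R : EuclideanSpace ℝ (Fin n) ≃ₗᵢ[ℝ]
      EuclideanSpace ℝ (Fin n), R x = z :=
    ⟨Submodule.reflection (ℝ ∙ (x - z))ᗮ, Submodule.reflection_sub hz.symm⟩
  have hmp : MeasurePreserving R volume volume := R.measurePreserving
  have hemb : MeasurableEmbedding R := R.toHomeomorph.measurableEmbedding
  have hpre : R ⁻¹' (ball z ρ) = ball x ρ := by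
    ext y
    simp only [mem_preimage, mem_ball]
    rw [← hR, dist_eq_norm, dist_eq_norm, ← map_sub, R.norm_map]
  calc ∫⁻ y in ball z ρ, ENNReal.ofReal |w y|
      = ∫⁻ y in R ⁻¹' (ball z ρ), ENNReal.ofReal |w (R y)| :=
        (hmp.setLIntegral_comp_preimage_emb hemb _ _).symm
    _ = ∫⁻ y in ball x ρ, ENNReal.ofReal |w y| := by
        rw [hpre]
        exact lintegral_congr fun y => by rw [hrad _ _ (R.norm_map y)]

private lemma radial_ball_mass {n : ℕ} (hn : 1 ≤ n) (w : EuclideanSpace ℝ (Fin n) → ℝ)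
    (hrad : ∀ x y : EuclideanSpace ℝ (Fin n), ‖x‖ = ‖y‖ → w x = w y)
    (hmeas : AEMeasurable w (volume : Measure (EuclideanSpace ℝ (Fin n))))
    (x : EuclideanSpace ℝ (Fin n)) {ρ : ℝ} (hρ : 0 < ρ) (hρ2 : 2 * ρ ≤ ‖x‖) :
    ∫⁻ y in ball x ρ, ENNReal.ofReal |w y| ≤
      ENNReal.ofReal (2 ^ n * (ρ / ‖x‖) ^ (n - 1)) * ∫⁻ y, ENNReal.ofReal |w y| := by
  haveI : Nontrivial (EuclideanSpace ℝ (Fin n)) :=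
    Module.nontrivial_of_finrank_pos (R := ℝ) (by rw [finrank_euclideanSpace_fin]; omega)
  set a := ‖x‖ with ha_def
  have ha : 0 < a := lt_of_lt_of_le (by linarith) hρ2
  set g : EuclideanSpace ℝ (Fin n) → ℝ≥0∞ := fun y => ENNReal.ofReal |w y| with hg_def
  have hg : AEMeasurable g (volume : Measure (EuclideanSpace ℝ (Fin n))) :=
    ((measurable_abs.comp_aemeasurable hmeas)).ennreal_ofReal
  set g' := hg.mk g with hg'_def
  have hg'm : Measurable g' := hg.measurable_mk
  have hgg' : g =ᵐ[volume] g' := hg.ae_eq_mk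
  set A : Set (EuclideanSpace ℝ (Fin n)) := closedBall (0 : _) a \ ball 0 (a - ρ) with hA_def
  have hAm : MeasurableSet A := measurableSet_closedBall.diff measurableSet_ball
  set m := n - 1 with hm_def
  have hnm : n = m + 1 := by omega
  have hfr : Module.finrank ℝ (EuclideanSpace ℝ (Fin n)) = n := finrank_euclideanSpace_fin
  set ω := volume (ball (0 : EuclideanSpace ℝ (Fin n)) 1) with hω_def
  have hωpos : 0 < ω := measure_ball_pos _ _ one_pos
  have hωtop : ω ≠ ⊤ := measure_ball_lt_top.ne
  -- lower bound for the annulus volume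
  have hvolA : ENNReal.ofReal (ρ * a ^ m) * ω ≤ volume A := by
    have hb0 : (0 : ℝ) ≤ a - ρ := by linarith
    have h1 : volume A = volume (closedBall (0 : EuclideanSpace ℝ (Fin n)) a)
        - volume (ball (0 : EuclideanSpace ℝ (Fin n)) (a - ρ)) :=
      measure_diff (ball_subset_closedBall.trans (closedBall_subset_closedBall (by linarith)))
        measurableSet_ball.nullMeasurableSet measure_ball_lt_top.ne
    rw [h1, Measure.addHaar_closedBall _ _ ha.le, Measure.addHaar_ball _ _ hb0, hfr]
    rw [← ENNReal.sub_mul (fun _ _ => hωtop), ← ENNReal.ofReal_sub _ (pow_nonneg hb0 n)]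
    refine mul_le_mul_left (ENNReal.ofReal_le_ofReal ?_) ω
    have hple : (a - ρ) ^ m ≤ a ^ m := pow_le_pow_left₀ hb0 (by linarith) m
    rw [hnm, pow_succ, pow_succ]
    nlinarith [pow_nonneg hb0 m, pow_nonneg ha.le m]
  -- pointwise comparison for z in the annulus
  have key : ∀ z ∈ A, ∫⁻ y in ball x ρ, g y ≤ ∫⁻ y in ball z (2 * ρ), g y := by
    intro z hz
    obtain ⟨hz1, hz2⟩ := hz
    rw [mem_closedBall, dist_zero_right] at hz1
    rw [mem_ball, dist_zero_right, not_lt] at hz2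
    have hzpos : 0 < ‖z‖ := lt_of_lt_of_le (by linarith) hz2
    set z' : EuclideanSpace ℝ (Fin n) := (a / ‖z‖) • z with hz'_def
    have hz'norm : ‖z'‖ = a := by
      rw [hz'_def, norm_smul, Real.norm_eq_abs, abs_of_pos (div_pos ha hzpos)]
      field_simp
    have h1 : ∫⁻ y in ball x ρ, g y = ∫⁻ y in ball z' ρ, g y :=
      (rot_lintegral' w hrad hz'norm ρ).symm
    rw [h1]
    apply lintegral_mono_set
    intro y hy
    rw [mem_ball] at hy ⊢
    have hdzz' : dist z' z ≤ ρ := by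
      rw [dist_eq_norm, hz'_def]
      have e1 : (a / ‖z‖) • z - z = ((a - ‖z‖) / ‖z‖) • z := by
        rw [sub_div, div_self hzpos.ne', sub_smul, one_smul]
      rw [e1, norm_smul, Real.norm_eq_abs,
        abs_of_nonneg (div_nonneg (by linarith) hzpos.le),
        div_mul_cancel₀ _ hzpos.ne']
      linarith
    calc dist y z ≤ dist y z' + dist z' z := dist_triangle _ _ _
      _ < ρ + ρ := add_lt_add_of_lt_of_le hy hdzz'
      _ = 2 * ρ := by ring
  -- the averaging estimate
  have hSmeas : MeasurableSet {p : EuclideanSpace ℝ (Fin n) × EuclideanSpace ℝ (Fin n) |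
      dist p.2 p.1 < 2 * ρ} :=
    (isOpen_lt (continuous_snd.dist continuous_fst) continuous_const).measurableSet
  set u : EuclideanSpace ℝ (Fin n) × EuclideanSpace ℝ (Fin n) → ℝ≥0∞ :=
    fun p => Set.indicator {p : EuclideanSpace ℝ (Fin n) × EuclideanSpace ℝ (Fin n) |
      dist p.2 p.1 < 2 * ρ} (fun q => g' q.2) p with hu_def
  have hu : Measurable u := (hg'm.comp measurable_snd).indicator hSmeas
  have hslice : ∀ z, ∫⁻ y, u (z, y) = ∫⁻ y in ball z (2 * ρ), g' y := by
    intro z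
    have e : (fun y => u (z, y)) = (ball z (2 * ρ)).indicator g' := by
      funext y
      simp only [hu_def, Set.indicator_apply, Set.mem_setOf_eq, mem_ball]
      rfl
    rw [e, lintegral_indicator measurableSet_ball]
  have main : volume A * ∫⁻ y in ball x ρ, g y ≤
      volume (ball (0 : EuclideanSpace ℝ (Fin n)) (2 * ρ)) * ∫⁻ y, g y := by
    calc volume A * ∫⁻ y in ball x ρ, g y
        = ∫⁻ _ in A, (∫⁻ y in ball x ρ, g y) ∂volume := by
          rw [setLIntegral_const, mul_comm]
      _ ≤ ∫⁻ z in A, (∫⁻ y, u (z, y)) ∂volume := by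
          refine setLIntegral_mono' hAm fun z hz => ?_
          rw [hslice z]
          calc ∫⁻ y in ball x ρ, g y ≤ ∫⁻ y in ball z (2 * ρ), g y := key z hz
            _ = ∫⁻ y in ball z (2 * ρ), g' y :=
              lintegral_congr_ae (ae_restrict_of_ae hgg')
      _ = ∫⁻ y, (∫⁻ z in A, u (z, y) ∂volume) ∂volume :=
          lintegral_lintegral_swap hu.aemeasurable
      _ ≤ ∫⁻ y, g' y * volume (ball (0 : EuclideanSpace ℝ (Fin n)) (2 * ρ)) := by
          refine lintegral_mono fun y => ?_
          have e : (fun z => u (z, y)) =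
              Set.indicator (ball y (2 * ρ)) (fun _ => g' y) := by
            funext z
            by_cases h : dist y z < 2 * ρ <;>
              simp [hu_def, Set.indicator_apply, mem_ball, dist_comm, h]
          rw [e, lintegral_indicator_const measurableSet_ball]
          rw [Measure.restrict_apply measurableSet_ball]
          refine mul_le_mul_right ?_ (g' y)
          rw [← Measure.addHaar_ball_center volume y]
          exact measure_mono inter_subset_left
      _ = volume (ball (0 : EuclideanSpace ℝ (Fin n)) (2 * ρ)) * ∫⁻ y, g' y := by
          rw [lintegral_mul_const _ hg'm, mul_comm]
      _ = volume (ball (0 : EuclideanSpace ℝ (Fin n)) (2 * ρ)) * ∫⁻ y, g y := by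
          rw [lintegral_congr_ae hgg'.symm]
  -- put everything together
  have hball2 : volume (ball (0 : EuclideanSpace ℝ (Fin n)) (2 * ρ)) =
      ENNReal.ofReal ((2 * ρ) ^ n) * ω := by
    rw [hω_def, Measure.addHaar_ball _ _ (by linarith : (0:ℝ) ≤ 2 * ρ), hfr]
  have hfactor : (2 * ρ) ^ n = 2 ^ n * (ρ / a) ^ m * (ρ * a ^ m) := by
    have : (ρ / a) ^ m = ρ ^ m / a ^ m := div_pow ρ a m
    rw [this, hnm]
    field_simp
    ring
  have hv0 : ENNReal.ofReal (ρ * a ^ m) * ω ≠ 0 :=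
    mul_ne_zero (ENNReal.ofReal_pos.mpr (by positivity)).ne' hωpos.ne'
  have hv0top : ENNReal.ofReal (ρ * a ^ m) * ω ≠ ⊤ :=
    ENNReal.mul_ne_top ENNReal.ofReal_ne_top hωtop
  rw [← ENNReal.mul_le_mul_iff_right hv0 hv0top]
  calc ENNReal.ofReal (ρ * a ^ m) * ω * ∫⁻ y in ball x ρ, g y
      ≤ volume A * ∫⁻ y in ball x ρ, g y := mul_le_mul_left hvolA _
    _ ≤ volume (ball (0 : EuclideanSpace ℝ (Fin n)) (2 * ρ)) * ∫⁻ y, g y := main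
    _ = ENNReal.ofReal (ρ * a ^ m) * ω *
        (ENNReal.ofReal (2 ^ n * (ρ / a) ^ m) * ∫⁻ y, g y) := by
        rw [hball2, hfactor, ENNReal.ofReal_mul (by positivity)]
        ring

/-- Let `n ≥ 2` and `0 < d < n − 1`. There is `C = C(n,d) > 0` such
that for every radially symmetric integrable `w : ℝⁿ → ℝ` and every `x ≠ 0`,
`|x|^d ∫ |x−y|^{−d} |w(y)| dy ≤ C ∫ |w(y)| dy`. -/
theorem weighted_radial_convolution_bound (n : ℕ) (hn : 2 ≤ n) (d : ℝ)
    (hd : 0 < d) (hdn : d < n - 1) :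
    ∃ C > 0, ∀ w : EuclideanSpace ℝ (Fin n) → ℝ,
      (∀ x y : EuclideanSpace ℝ (Fin n), ‖x‖ = ‖y‖ → w x = w y) →
      Integrable w →
      ∀ x : EuclideanSpace ℝ (Fin n), x ≠ 0 →
        ‖x‖ ^ d * (∫ y : EuclideanSpace ℝ (Fin n), ‖x - y‖ ^ (-d) * |w y|) ≤
          C * ∫ y : EuclideanSpace ℝ (Fin n), |w y| := by
  have hn1 : 1 ≤ n := by omega
  set θ : ℝ := (2:ℝ) ^ (d - ((n:ℝ) - 1)) with hθ_def
  have hθpos : 0 < θ := rpow_pos_of_pos two_pos _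
  have hθlt : θ < 1 := by
    apply Real.rpow_lt_one_of_one_lt_of_neg one_lt_two (by linarith)
  have h1θ : 0 < 1 - θ := by linarith
  have hC : (0:ℝ) < 2 ^ d + 2 ^ (2*d+1) * (1 - θ)⁻¹ :=
    add_pos (rpow_pos_of_pos two_pos d)
      (mul_pos (rpow_pos_of_pos two_pos _) (inv_pos.mpr h1θ))
  refine ⟨2 ^ d + 2 ^ (2*d+1) * (1 - θ)⁻¹, hC, ?_⟩
  intro w hrad hint x hx
  classical
  set C : ℝ := 2 ^ d + 2 ^ (2*d+1) * (1 - θ)⁻¹ with hC_def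
  haveI : Nontrivial (EuclideanSpace ℝ (Fin n)) :=
    Module.nontrivial_of_finrank_pos (R := ℝ) (by rw [finrank_euclideanSpace_fin]; omega)
  have ha : (0:ℝ) < ‖x‖ := norm_pos_iff.mpr hx
  set a : ℝ := ‖x‖ with ha_def
  set g : EuclideanSpace ℝ (Fin n) → ℝ≥0∞ := fun y => ENNReal.ofReal |w y| with hg_def
  set W : ℝ≥0∞ := ∫⁻ y, g y with hW_def
  have hwm : AEMeasurable w (volume : Measure (EuclideanSpace ℝ (Fin n))) := hint.aemeasurable
  have hWne : W ≠ ⊤ := by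
    have h2 := hint.2
    rw [hasFiniteIntegral_iff_norm] at h2
    simp only [Real.norm_eq_abs] at h2
    exact h2.ne
  have hk0 : ∀ y : EuclideanSpace ℝ (Fin n), 0 ≤ ‖x - y‖ ^ (-d) :=
    fun y => rpow_nonneg (norm_nonneg _) _
  have hkm : Measurable (fun y : EuclideanSpace ℝ (Fin n) => ‖x - y‖ ^ (-d)) :=
    ((measurable_const.sub measurable_id).norm).pow measurable_const
  set L : ℝ≥0∞ := ∫⁻ y, ENNReal.ofReal (‖x - y‖ ^ (-d)) * g y with hL_def
  -- the shells and radii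
  set r : ℕ → ℝ := fun j => a * (2:ℝ) ^ (-((j:ℝ) + 1)) with hr_def
  have hrpos : ∀ j, 0 < r j := fun j => mul_pos ha (rpow_pos_of_pos two_pos _)
  have hr0 : r 0 = a / 2 := by
    simp only [hr_def, Nat.cast_zero]
    rw [show -((0:ℝ)+1) = -1 by ring, Real.rpow_neg_one]
    ring
  have hrhalf : ∀ j, 2 * r j ≤ a := by
    intro j
    have h1 : (2:ℝ) ^ (-((j:ℝ)+1)) ≤ 2 ^ (-1:ℝ) :=
      Real.rpow_le_rpow_of_exponent_le one_le_two
        (by have : (0:ℝ) ≤ (j:ℝ) := Nat.cast_nonneg j; linarith)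
    have h2 : (2:ℝ) ^ (-1:ℝ) = 1/2 := by rw [Real.rpow_neg_one]; norm_num
    have h3 : a * (2:ℝ) ^ (-((j:ℝ)+1)) ≤ a * (1/2) := by
      rw [← h2]; exact mul_le_mul_of_nonneg_left h1 ha.le
    calc 2 * r j = 2 * (a * (2:ℝ) ^ (-((j:ℝ)+1))) := rfl
      _ ≤ 2 * (a * (1/2)) := by linarith
      _ = a := by ring
  set t : Set (EuclideanSpace ℝ (Fin n)) := ball x (a/2) with ht_def
  set shell : ℕ → Set (EuclideanSpace ℝ (Fin n)) :=
    fun j => ball x (r j) \ ball x (r (j+1)) with hshell_def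
  have hcover : t \ {x} ⊆ ⋃ j, shell j := by
    intro y hy
    obtain ⟨hyt, hyx⟩ := hy
    have hyx' : y ≠ x := by simpa using hyx
    have hdy : 0 < dist y x := dist_pos.mpr hyx'
    have hpow2 : ∀ kk : ℕ, (2:ℝ) ^ (-(kk:ℝ)) = (2⁻¹:ℝ) ^ kk := by
      intro kk
      rw [Real.rpow_neg (by norm_num : (0:ℝ) ≤ 2), Real.rpow_natCast, inv_pow]
    have hex : ∃ j, r (j+1) ≤ dist y x := by
      obtain ⟨mm, hmm⟩ := exists_pow_lt_of_lt_one (div_pos hdy ha)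
        (by norm_num : (2⁻¹:ℝ) < 1)
      refine ⟨mm, ?_⟩
      have e1 : r (mm+1) = a * (2:ℝ) ^ (-((mm:ℝ)+2)) := by
        simp only [hr_def]
        push_cast
        ring_nf
      have e2 : (2:ℝ) ^ (-((mm:ℝ)+2)) ≤ (2:ℝ) ^ (-(mm:ℝ)) :=
        Real.rpow_le_rpow_of_exponent_le one_le_two (by linarith)
      have e3 : a * (2⁻¹:ℝ) ^ mm < dist y x := by
        have h4 := mul_lt_mul_of_pos_left hmm ha
        rwa [mul_div_cancel₀ _ ha.ne'] at h4
      rw [e1]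
      calc a * (2:ℝ) ^ (-((mm:ℝ)+2)) ≤ a * (2:ℝ) ^ (-(mm:ℝ)) :=
            mul_le_mul_of_nonneg_left e2 ha.le
        _ = a * (2⁻¹:ℝ) ^ mm := by rw [hpow2]
        _ ≤ dist y x := e3.le
    set j := Nat.find hex with hj_def
    have hj1 : r (j+1) ≤ dist y x := Nat.find_spec hex
    have hj2 : dist y x < r j := by
      rcases Nat.eq_zero_or_pos j with h0 | hpos0
      · rw [h0, hr0]
        exact mem_ball.mp hyt
      · have hlt := Nat.find_min hex (show j - 1 < j from Nat.sub_lt hpos0 one_pos)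
        have hj : j - 1 + 1 = j := Nat.succ_pred_eq_of_pos hpos0
        rw [hj] at hlt
        linarith [not_le.mp hlt]
    exact mem_iUnion.mpr ⟨j, mem_ball.mpr hj2,
      fun hc => absurd (mem_ball.mp hc) (not_lt.mpr hj1)⟩
  -- core estimate in ℝ≥0∞
  have core : ENNReal.ofReal (a ^ d) * L ≤ ENNReal.ofReal C * W := by
    have hfar : ∫⁻ y in tᶜ, ENNReal.ofReal (‖x - y‖ ^ (-d)) * g y ≤
        ENNReal.ofReal ((a/2) ^ (-d)) * W := by
      calc ∫⁻ y in tᶜ, ENNReal.ofReal (‖x - y‖ ^ (-d)) * g y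
          ≤ ∫⁻ y in tᶜ, ENNReal.ofReal ((a/2) ^ (-d)) * g y := by
            refine setLIntegral_mono' measurableSet_ball.compl fun y hy => ?_
            refine mul_le_mul_left (ENNReal.ofReal_le_ofReal ?_) _
            have hyx2 : a/2 ≤ ‖x - y‖ := by
              rw [ht_def, mem_compl_iff, mem_ball, not_lt] at hy
              calc a/2 ≤ dist y x := hy
                _ = ‖x - y‖ := by rw [dist_eq_norm, norm_sub_rev]
            exact rpow_le_rpow_of_nonpos (by positivity) hyx2 (by linarith)
        _ = ENNReal.ofReal ((a/2) ^ (-d)) * ∫⁻ y in tᶜ, g y :=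
            lintegral_const_mul' _ _ ENNReal.ofReal_ne_top
        _ ≤ ENNReal.ofReal ((a/2) ^ (-d)) * W :=
            mul_le_mul_right (setLIntegral_le_lintegral _ _) _
    have hshellbd : ∀ j, ∫⁻ y in shell j, ENNReal.ofReal (‖x - y‖ ^ (-d)) * g y ≤
        ENNReal.ofReal ((r (j+1)) ^ (-d)) *
          (ENNReal.ofReal (2^n * (r j / a)^(n-1)) * W) := by
      intro j
      calc ∫⁻ y in shell j, ENNReal.ofReal (‖x - y‖ ^ (-d)) * g y
          ≤ ∫⁻ y in shell j, ENNReal.ofReal ((r (j+1)) ^ (-d)) * g y := by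
            refine setLIntegral_mono' (measurableSet_ball.diff measurableSet_ball)
              fun y hy => ?_
            refine mul_le_mul_left (ENNReal.ofReal_le_ofReal ?_) _
            have h1 : r (j+1) ≤ ‖x - y‖ := by
              have h2 := hy.2
              rw [mem_ball, not_lt] at h2
              calc r (j+1) ≤ dist y x := h2
                _ = ‖x - y‖ := by rw [dist_eq_norm, norm_sub_rev]
            exact rpow_le_rpow_of_nonpos (hrpos (j+1)) h1 (by linarith)
        _ = ENNReal.ofReal ((r (j+1)) ^ (-d)) * ∫⁻ y in shell j, g y :=
            lintegral_const_mul' _ _ ENNReal.ofReal_ne_top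
        _ ≤ ENNReal.ofReal ((r (j+1)) ^ (-d)) * ∫⁻ y in ball x (r j), g y :=
            mul_le_mul_right (lintegral_mono_set diff_subset) _
        _ ≤ _ := mul_le_mul_right
            (radial_ball_mass hn1 w hrad hwm x (hrpos j) (hrhalf j)) _
    have hxnull : volume ({x} : Set (EuclideanSpace ℝ (Fin n))) = 0 := measure_singleton x
    have hae : (t \ {x} : Set (EuclideanSpace ℝ (Fin n))) =ᵐ[volume] t :=
      diff_ae_eq_self.mpr
        (le_antisymm (le_trans (measure_mono inter_subset_right) hxnull.le) zero_le)
    have hnear : ∫⁻ y in t, ENNReal.ofReal (‖x - y‖ ^ (-d)) * g y ≤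
        ∑' j, (ENNReal.ofReal ((r (j+1)) ^ (-d)) *
          (ENNReal.ofReal (2^n * (r j / a)^(n-1)) * W)) := by
      calc ∫⁻ y in t, ENNReal.ofReal (‖x - y‖ ^ (-d)) * g y
          = ∫⁻ y in t \ {x}, ENNReal.ofReal (‖x - y‖ ^ (-d)) * g y :=
            (setLIntegral_congr hae).symm
        _ ≤ ∫⁻ y in ⋃ j, shell j, ENNReal.ofReal (‖x - y‖ ^ (-d)) * g y :=
            lintegral_mono_set hcover
        _ ≤ ∑' j, ∫⁻ y in shell j, ENNReal.ofReal (‖x - y‖ ^ (-d)) * g y :=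
            lintegral_iUnion_le _ _
        _ ≤ _ := ENNReal.tsum_le_tsum hshellbd
    -- coefficient computation
    have hcoef : ∀ j : ℕ, a ^ d * ((r (j+1)) ^ (-d) * (2^n * (r j / a)^(n-1))) ≤
        2 ^ (2*d+1) * θ ^ j := by
      intro j
      have hmul2 : ∀ p q : ℝ, (2:ℝ)^p * (2:ℝ)^q = 2^(p+q) :=
        fun p q => (Real.rpow_add two_pos p q).symm
      have hnpow : ∀ (q:ℝ) (mm:ℕ), ((2:ℝ)^q)^mm = (2:ℝ)^(q*mm) := by
        intro q mm
        rw [← Real.rpow_natCast ((2:ℝ)^q) mm, ← Real.rpow_mul (by norm_num : (0:ℝ) ≤ 2)]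
      have hrpow : ∀ (q c:ℝ), ((2:ℝ)^q)^c = (2:ℝ)^(q*c) := by
        intro q c
        rw [← Real.rpow_mul (by norm_num : (0:ℝ) ≤ 2)]
      have hθj : θ^j = (2:ℝ)^((d-((n:ℝ)-1))*j) := hnpow _ j
      have h2n : (2:ℝ)^n = (2:ℝ)^((n:ℕ):ℝ) := (Real.rpow_natCast 2 n).symm
      have e1 : r (j+1) = a * (2:ℝ) ^ (-((j:ℝ)+2)) := by
        simp only [hr_def]
        push_cast
        ring_nf
      have e2 : r j / a = (2:ℝ) ^ (-((j:ℝ)+1)) := by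
        simp only [hr_def]
        field_simp
      have had : a ^ d * a ^ (-d) = 1 := by
        rw [← Real.rpow_add ha, add_neg_cancel, Real.rpow_zero]
      apply le_of_eq
      rw [e1, e2, Real.mul_rpow ha.le (rpow_pos_of_pos two_pos _).le, hrpow, hnpow,
        hθj, h2n]
      calc a ^ d * (a ^ (-d) * (2:ℝ)^(-((j:ℝ)+2)*(-d)) *
            ((2:ℝ)^((n:ℕ):ℝ) * (2:ℝ)^(-((j:ℝ)+1)*((n-1:ℕ):ℝ))))
          = (a ^ d * a ^ (-d)) * ((2:ℝ)^(-((j:ℝ)+2)*(-d)) * (2:ℝ)^((n:ℕ):ℝ) *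
            (2:ℝ)^(-((j:ℝ)+1)*((n-1:ℕ):ℝ))) := by ring
        _ = (2:ℝ)^(-((j:ℝ)+2)*(-d) + ((n:ℕ):ℝ) + -((j:ℝ)+1)*((n-1:ℕ):ℝ)) := by
            rw [had, one_mul, hmul2, hmul2]
        _ = (2:ℝ)^((2*d+1) + (d-((n:ℝ)-1))*(j:ℝ)) := by
            congr 1
            push_cast [Nat.cast_sub hn1]
            ring
        _ = 2 ^ (2*d+1) * (2:ℝ)^((d-((n:ℝ)-1))*(j:ℝ)) := by rw [← hmul2]
    have hterm : ∀ j : ℕ, ENNReal.ofReal (a^d) * (ENNReal.ofReal ((r (j+1))^(-d)) *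
        (ENNReal.ofReal (2^n * (r j / a)^(n-1)) * W)) ≤
        ENNReal.ofReal (2^(2*d+1) * θ^j) * W := by
      intro j
      have e : ENNReal.ofReal (a^d) * (ENNReal.ofReal ((r (j+1))^(-d)) *
          (ENNReal.ofReal (2^n * (r j / a)^(n-1)) * W)) =
          ENNReal.ofReal (a^d * ((r (j+1))^(-d) * (2^n * (r j / a)^(n-1)))) * W := by
        rw [ENNReal.ofReal_mul (by positivity : (0:ℝ) ≤ a^d),
          ENNReal.ofReal_mul (rpow_nonneg (hrpos (j+1)).le _)]
        ring
      rw [e]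
      exact mul_le_mul_left (ENNReal.ofReal_le_ofReal (hcoef j)) W
    have hsum : ∑' j : ℕ, ENNReal.ofReal (2^(2*d+1) * θ^j) =
        ENNReal.ofReal (2^(2*d+1) * (1-θ)⁻¹) := by
      have e : ∀ j : ℕ, ENNReal.ofReal (2^(2*d+1) * θ^j) =
          ENNReal.ofReal (2^(2*d+1)) * (ENNReal.ofReal θ)^j := by
        intro j
        rw [ENNReal.ofReal_mul (by positivity), ENNReal.ofReal_pow hθpos.le]
      rw [tsum_congr e, ENNReal.tsum_mul_left, ENNReal.tsum_geometric]
      rw [ENNReal.ofReal_mul (by positivity), ENNReal.ofReal_inv_of_pos h1θ,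
        ENNReal.ofReal_sub _ hθpos.le, ENNReal.ofReal_one]
    have hfar2 : ENNReal.ofReal (a^d) * (ENNReal.ofReal ((a/2)^(-d)) * W) =
        ENNReal.ofReal ((2:ℝ)^d) * W := by
      rw [← mul_assoc, ← ENNReal.ofReal_mul (by positivity : (0:ℝ) ≤ a^d)]
      congr 2
      have e : (a/2:ℝ)^(-d) = a^(-d) * (2:ℝ)^d := by
        rw [div_eq_mul_inv, Real.mul_rpow ha.le (by norm_num : (0:ℝ) ≤ (2:ℝ)⁻¹),
          Real.inv_rpow (by norm_num : (0:ℝ) ≤ 2), ← Real.rpow_neg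
          (by norm_num : (0:ℝ) ≤ 2), neg_neg]
      rw [e, ← mul_assoc, ← Real.rpow_add ha, add_neg_cancel, Real.rpow_zero, one_mul]
    have hsplit : L = (∫⁻ y in t, ENNReal.ofReal (‖x - y‖ ^ (-d)) * g y) +
        ∫⁻ y in tᶜ, ENNReal.ofReal (‖x - y‖ ^ (-d)) * g y :=
      (lintegral_add_compl _ measurableSet_ball).symm
    rw [hsplit, mul_add]
    have hnear2 : ENNReal.ofReal (a^d) * ∫⁻ y in t, ENNReal.ofReal (‖x - y‖ ^ (-d)) * g y ≤
        ENNReal.ofReal (2^(2*d+1) * (1-θ)⁻¹) * W := by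
      calc ENNReal.ofReal (a^d) * ∫⁻ y in t, ENNReal.ofReal (‖x - y‖ ^ (-d)) * g y
          ≤ ENNReal.ofReal (a^d) * ∑' j, (ENNReal.ofReal ((r (j+1)) ^ (-d)) *
            (ENNReal.ofReal (2^n * (r j / a)^(n-1)) * W)) := mul_le_mul_right hnear _
        _ = ∑' j, ENNReal.ofReal (a^d) * (ENNReal.ofReal ((r (j+1)) ^ (-d)) *
            (ENNReal.ofReal (2^n * (r j / a)^(n-1)) * W)) := ENNReal.tsum_mul_left.symm
        _ ≤ ∑' j, ENNReal.ofReal (2^(2*d+1) * θ^j) * W := ENNReal.tsum_le_tsum hterm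
        _ = (∑' j : ℕ, ENNReal.ofReal (2^(2*d+1) * θ^j)) * W := ENNReal.tsum_mul_right
        _ = ENNReal.ofReal (2^(2*d+1) * (1-θ)⁻¹) * W := by rw [hsum]
    have hfar3 : ENNReal.ofReal (a^d) * ∫⁻ y in tᶜ, ENNReal.ofReal (‖x - y‖ ^ (-d)) * g y ≤
        ENNReal.ofReal ((2:ℝ)^d) * W := by
      calc ENNReal.ofReal (a^d) * ∫⁻ y in tᶜ, ENNReal.ofReal (‖x - y‖ ^ (-d)) * g y
          ≤ ENNReal.ofReal (a^d) * (ENNReal.ofReal ((a/2) ^ (-d)) * W) :=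
            mul_le_mul_right hfar _
        _ = ENNReal.ofReal ((2:ℝ)^d) * W := hfar2
    calc (ENNReal.ofReal (a^d) * ∫⁻ y in t, ENNReal.ofReal (‖x - y‖ ^ (-d)) * g y) +
          ENNReal.ofReal (a^d) * ∫⁻ y in tᶜ, ENNReal.ofReal (‖x - y‖ ^ (-d)) * g y
        ≤ ENNReal.ofReal (2^(2*d+1) * (1-θ)⁻¹) * W + ENNReal.ofReal ((2:ℝ)^d) * W :=
          add_le_add hnear2 hfar3
      _ = ENNReal.ofReal C * W := by
          rw [← add_mul, ← ENNReal.ofReal_add (by positivity) (by positivity), hC_def]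
          ring_nf
  -- back to real integrals
  have hLne : L ≠ ⊤ := by
    intro hL
    have h1 : ENNReal.ofReal (a^d) * L = ⊤ := by
      rw [hL, ENNReal.mul_top (ENNReal.ofReal_pos.mpr (by positivity : (0:ℝ) < a^d)).ne']
    rw [h1] at core
    exact (ENNReal.mul_ne_top ENNReal.ofReal_ne_top hWne) (top_le_iff.mp core)
  have hconv1 : ∫ y : EuclideanSpace ℝ (Fin n), ‖x - y‖ ^ (-d) * |w y| = L.toReal := by
    rw [integral_eq_lintegral_of_nonneg_ae
      (Filter.Eventually.of_forall fun y => mul_nonneg (hk0 y) (abs_nonneg _))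
      ((hkm.aestronglyMeasurable).mul hint.abs.aestronglyMeasurable)]
    congr 1
    exact lintegral_congr fun y => ENNReal.ofReal_mul (hk0 y)
  have hconv2 : ∫ y : EuclideanSpace ℝ (Fin n), |w y| = W.toReal := by
    rw [integral_eq_lintegral_of_nonneg_ae
      (Filter.Eventually.of_forall fun y => abs_nonneg (w y))
      hint.abs.aestronglyMeasurable]
  rw [hconv1, hconv2]
  have hfin : ENNReal.ofReal C * W ≠ ⊤ := ENNReal.mul_ne_top ENNReal.ofReal_ne_top hWne
  have h2 := ENNReal.toReal_mono hfin core
  rw [ENNReal.toReal_mul, ENNReal.toReal_mul,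
    ENNReal.toReal_ofReal (by positivity : (0:ℝ) ≤ a^d),
    ENNReal.toReal_ofReal hC.le] at h2
  exact h2
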